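/- Let Γ be a finite simple graph and let Γ⁺ be the graph obtained from Γ by adjoining one new vertex v_0 adjacent to every vertex of Γ. Then Γ has a SIL if and only if Γ⁺ has a SIL. -/

import Mathlib

def glink {V : Type*} (G : SimpleGraph V) (v : V) : Set V := {u | G.Adj v u}

def IsCompOf {V : Type*} (G : SimpleGraph V) (s K : Set V) : Prop :=
  K.Nonempty ∧ K ⊆ s ∧ (G.induce K).Connected ∧
    ∀ K' : Set V, K ⊆ K' → K' ⊆ s → (G.induce K').Connected → K' = K

/-- Γ contains a separating intersection of links. -/
def HasSIL {V : Type*} (G : SimpleGraph V) : Prop :=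
  ∃ i j : V, ∃ R : Set V, i ≠ j ∧ ¬ G.Adj i j ∧
    IsCompOf G ((glink G i ∩ glink G j)ᶜ) R ∧ i ∉ R ∧ j ∉ R

/-- The graph Γ⁺ obtained from Γ by adjoining a new vertex adjacent to all vertices of Γ. -/
def Gplus {V : Type*} (G : SimpleGraph V) : SimpleGraph (Option V) where
  Adj a b := a ≠ b ∧ ∀ u w : V, a = some u → b = some w → G.Adj u w
  symm := by
    constructor
    rintro a b ⟨hne, h⟩
    exact ⟨hne.symm, fun u w hb ha => (h w u ha hb).symm⟩
  loopless := by constructor; rintro a ⟨hne, -⟩; exact hne rfl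

lemma gplus_adj_some {V : Type*} {G : SimpleGraph V} {u w : V} :
    (Gplus G).Adj (some u) (some w) ↔ G.Adj u w := by
  constructor
  · rintro ⟨-, h⟩; exact h u w rfl rfl
  · intro h
    exact ⟨by simpa using h.ne, fun a b ha hb => by
      cases ha; cases hb; simpa using h⟩

lemma gplus_adj_none {V : Type*} {G : SimpleGraph V} (u : V) :
    (Gplus G).Adj none (some u) :=
  ⟨by simp, fun a b ha _ => by simp at ha⟩

/-- Isomorphism between induced subgraphs. -/
noncomputable def induceIso {V : Type*} (G : SimpleGraph V) (K : Set V) :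
    G.induce K ≃g (Gplus G).induce (some '' K) := by
  refine ⟨Equiv.Set.image some K (Option.some_injective V), ?_⟩
  rintro ⟨a, ha⟩ ⟨b, hb⟩
  simp only [Equiv.Set.image, Equiv.Set.imageOfInjOn]
  exact gplus_adj_some

lemma conn_iff {V : Type*} (G : SimpleGraph V) (K : Set V) :
    (G.induce K).Connected ↔ ((Gplus G).induce (some '' K)).Connected :=
  (induceIso G K).connected_iff

lemma comp_iff {V : Type*} (G : SimpleGraph V) (s K : Set V) :
    IsCompOf G s K ↔ IsCompOf (Gplus G) (some '' s) (some '' K) := by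
  constructor
  · rintro ⟨hne, hsub, hconn, hmax⟩
    refine ⟨hne.image _, Set.image_mono hsub, (conn_iff G K).1 hconn, ?_⟩
    intro K' hKK' hK's hconn'
    have hK'sub : K' ⊆ Set.range some := hK's.trans (Set.image_subset_range _ _)
    have hK'eq : some '' (some ⁻¹' K') = K' :=
      Set.image_preimage_eq_of_subset hK'sub
    have h1 : K ⊆ some ⁻¹' K' := fun x hx => hKK' ⟨x, hx, rfl⟩
    have h2 : some ⁻¹' K' ⊆ s := by
      intro x hx
      obtain ⟨y, hy, hxy⟩ := hK's hx
      cases Option.some_injective V hxy.symm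
      exact hy
    have h3 : (G.induce (some ⁻¹' K')).Connected := by
      rw [conn_iff, hK'eq]; exact hconn'
    rw [← hK'eq, hmax _ h1 h2 h3]
  · rintro ⟨hne, hsub, hconn, hmax⟩
    have inj := Option.some_injective V
    refine ⟨?_, ?_, ?_, ?_⟩
    · obtain ⟨x, hx⟩ := hne
      obtain ⟨y, hy, -⟩ := hx
      exact ⟨y, hy⟩
    · intro x hx
      obtain ⟨y, hy, hxy⟩ := hsub ⟨x, hx, rfl⟩
      cases inj hxy.symm; exact hy
    · exact (conn_iff G K).2 hconn
    · intro K' hKK' hK's hconn'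
      have := hmax (some '' K') (Set.image_mono hKK')
        (Set.image_mono hK's) ((conn_iff G K').1 hconn')
      exact Set.image_injective.2 inj this

lemma compl_eq {V : Type*} (G : SimpleGraph V) (u w : V) :
    (glink (Gplus G) (some u) ∩ glink (Gplus G) (some w))ᶜ =
      some '' ((glink G u ∩ glink G w)ᶜ) := by
  ext x
  cases x with
  | none =>
    simp only [Set.mem_compl_iff, Set.mem_inter_iff, glink, Set.mem_setOf_eq,
      Set.mem_image]
    constructor
    · intro h
      exact absurd ⟨((gplus_adj_none u).symm : (Gplus G).Adj (some u) none),
        ((gplus_adj_none w).symm : (Gplus G).Adj (some w) none)⟩ h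
    · rintro ⟨y, -, h⟩; simp at h
  | some x =>
    simp only [Set.mem_compl_iff, Set.mem_inter_iff, glink, Set.mem_setOf_eq,
      Set.mem_image, gplus_adj_some]
    constructor
    · intro h
      exact ⟨x, h, rfl⟩
    · rintro ⟨y, hy, hxy⟩
      cases Option.some_injective V hxy.symm
      exact hy

theorem stmt6 {V : Type*} [Fintype V] (G : SimpleGraph V) :
    HasSIL G ↔ HasSIL (Gplus G) := by
  constructor
  · rintro ⟨i, j, R, hij, hadj, hcomp, hiR, hjR⟩
    refine ⟨some i, some j, some '' R, by simpa using hij,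
      by rw [gplus_adj_some]; exact hadj, ?_, ?_, ?_⟩
    · rw [compl_eq]; exact (comp_iff G _ R).1 hcomp
    · rintro ⟨x, hx, hxi⟩; cases Option.some_injective V hxi.symm; exact hiR hx
    · rintro ⟨x, hx, hxj⟩; cases Option.some_injective V hxj.symm; exact hjR hx
  · rintro ⟨i, j, R, hij, hadj, hcomp, hiR, hjR⟩
    obtain ⟨u, rfl⟩ : ∃ u, i = some u := by
      cases i with
      | none =>
        cases j with
        | none => exact absurd rfl hij
        | some w => exact absurd (gplus_adj_none w) hadj
      | some u => exact ⟨u, rfl⟩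
    obtain ⟨w, rfl⟩ : ∃ w, j = some w := by
      cases j with
      | none => exact absurd (gplus_adj_none u).symm hadj
      | some w => exact ⟨w, rfl⟩
    rw [compl_eq] at hcomp
    have hRsub : R ⊆ Set.range some :=
      hcomp.2.1.trans (Set.image_subset_range _ _)
    have hReq : some '' (some ⁻¹' R) = R := Set.image_preimage_eq_of_subset hRsub
    refine ⟨u, w, some ⁻¹' R, fun h => hij (by rw [h]),
      fun h => hadj (gplus_adj_some.2 h), ?_, fun h => hiR h, fun h => hjR h⟩
    rw [comp_iff, hReq]
    exact hcomp
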